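/- Let 0 < α < 1/2 and let u, v be mean-zero functions in L²(T). Define T^{+,+}(u,v)(x) = ∑_{ξη(ξ+η)≠0} σ^{+,+}(ξ,η)·û(ξ)·v̂(η)·e^{i(ξ+η)x} where |σ^{+,+}(ξ,η)| ≲ 1/(⟨ξ+η⟩^α·⟨ξ⟩^{1−α}·⟨η⟩^{1−α}). Then ‖T^{+,+}(u,v)‖_{H¹(T)} ≲ ‖u‖_{L²(T)}·‖v‖_{L²(T)}. -/

import Mathlib

noncomputable def jap (x : ℝ) : ℝ := Real.sqrt (1 + x^2)

/-- `T^{+,+}(u,v)` at the level of Fourier coefficients: the `n`-th Fourier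
coefficient is `∑_{ξ+η=n} σ(ξ,η) û(ξ) v̂(η)`. -/
noncomputable def Tcoef (σ : ℤ → ℤ → ℂ) (u v : ℤ → ℂ) (n : ℤ) : ℂ :=
  ∑' ξ : ℤ, σ ξ (n - ξ) * u ξ * v (n - ξ)

open MeasureTheory ENNReal

lemma ennreal_cs (f g : ℤ → ℝ≥0∞) :
    (∑' n, f n * g n)^2 ≤ (∑' n, (f n)^2) * (∑' n, (g n)^2) := by
  have hconj : Real.HolderConjugate 2 2 := by constructor <;> norm_num
  have hf : AEMeasurable f (Measure.count : Measure ℤ) := (measurable_from_top).aemeasurable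
  have hg : AEMeasurable g (Measure.count : Measure ℤ) := (measurable_from_top).aemeasurable
  have h := ENNReal.lintegral_mul_le_Lp_mul_Lq (Measure.count : Measure ℤ) hconj hf hg
  simp only [Pi.mul_apply, lintegral_count] at h
  have h2 : ∀ x : ℝ≥0∞, x ^ (2:ℝ) = x ^ 2 := fun x => by
    rw [← ENNReal.rpow_natCast x 2]; norm_num
  simp only [h2] at h
  calc (∑' n, f n * g n)^2
      ≤ ((∑' n, (f n)^2) ^ ((1:ℝ)/2) * (∑' n, (g n)^2) ^ ((1:ℝ)/2))^2 := by
        exact pow_le_pow_left' h 2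
    _ = (∑' n, (f n)^2) * (∑' n, (g n)^2) := by
        rw [mul_pow, ← ENNReal.rpow_natCast (_ ^ ((1:ℝ)/2)) 2, ← ENNReal.rpow_natCast (_ ^ ((1:ℝ)/2)) 2,
          ← ENNReal.rpow_mul, ← ENNReal.rpow_mul]
        norm_num

lemma ennreal_young (f g : ℤ → ℝ≥0∞) :
    ∑' n, (∑' ξ, f ξ * g (n - ξ))^2 ≤ (∑' ξ, (f ξ)^2) * (∑' η, g η)^2 := by
  have hsq : ∀ x : ℝ≥0∞, x ^ ((1:ℝ)/2) * x ^ ((1:ℝ)/2) = x := fun x => by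
    rw [← ENNReal.rpow_add_of_nonneg _ _ (by norm_num) (by norm_num)]; norm_num
  have key : ∀ n : ℤ, (∑' ξ, f ξ * g (n - ξ))^2
      ≤ (∑' ξ, (f ξ)^2 * g (n - ξ)) * (∑' η, g η) := by
    intro n
    have h1 : (∑' ξ, f ξ * g (n - ξ)) = ∑' ξ, (f ξ * (g (n-ξ)) ^ ((1:ℝ)/2)) * (g (n-ξ)) ^ ((1:ℝ)/2) := by
      congr 1; funext ξ; rw [mul_assoc, hsq]
    have h2 := ennreal_cs (fun ξ => f ξ * (g (n-ξ)) ^ ((1:ℝ)/2)) (fun ξ => (g (n-ξ)) ^ ((1:ℝ)/2))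
    rw [h1]
    refine h2.trans (le_of_eq ?_)
    congr 1
    · congr 1; funext ξ; rw [mul_pow]; congr 1; rw [sq, hsq]
    · rw [show (∑' ξ:ℤ, ((g (n-ξ)) ^ ((1:ℝ)/2))^2) = ∑' ξ:ℤ, g (n-ξ) from by
        congr 1; funext ξ; rw [sq, hsq]]
      exact (Equiv.subLeft n).tsum_eq g
  calc ∑' n, (∑' ξ, f ξ * g (n - ξ))^2
      ≤ ∑' n, (∑' ξ, (f ξ)^2 * g (n - ξ)) * (∑' η, g η) := ENNReal.tsum_le_tsum key
    _ = (∑' η, g η) * ∑' n, ∑' ξ, (f ξ)^2 * g (n - ξ) := by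
        rw [ENNReal.tsum_mul_right, mul_comm]
    _ = (∑' η, g η) * ∑' ξ, ∑' n, (f ξ)^2 * g (n - ξ) := by rw [ENNReal.tsum_comm]
    _ = (∑' η, g η) * ((∑' ξ, (f ξ)^2) * (∑' η, g η)) := by
        congr 1
        rw [← ENNReal.tsum_mul_right]
        congr 1; funext ξ
        rw [ENNReal.tsum_mul_left]
        congr 1
        exact (Equiv.subRight ξ).tsum_eq g
    _ = (∑' ξ, (f ξ)^2) * (∑' η, g η)^2 := by ring

lemma jap_pos (x : ℝ) : 0 < jap x := Real.sqrt_pos.2 (by positivity)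
lemma one_le_jap (x : ℝ) : 1 ≤ jap x := by
  rw [show (1:ℝ) = Real.sqrt 1 from (Real.sqrt_one).symm]
  exact Real.sqrt_le_sqrt (by nlinarith)
lemma abs_le_jap (x : ℝ) : |x| ≤ jap x := by
  rw [show |x| = Real.sqrt (x^2) from (Real.sqrt_sq_eq_abs x).symm]
  exact Real.sqrt_le_sqrt (by nlinarith)
lemma jap_add_le (x y : ℝ) : jap (x + y) ≤ 2 * (jap x + jap y) := by
  have hx := jap_pos x; have hy := jap_pos y
  have h2 : (jap x)^2 = 1 + x^2 := Real.sq_sqrt (by positivity)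
  have h3 : (jap y)^2 = 1 + y^2 := Real.sq_sqrt (by positivity)
  have : jap (x+y) ≤ Real.sqrt ((2*(jap x + jap y))^2) := by
    apply Real.sqrt_le_sqrt; nlinarith [sq_nonneg (x - y), mul_pos hx hy, sq_nonneg (x+y)]
  rwa [Real.sqrt_sq (by positivity)] at this

lemma real_rpow_add_le {x y p : ℝ} (hx : 0 ≤ x) (hy : 0 ≤ y) (hp : 0 ≤ p) (hp1 : p ≤ 1) :
    (x + y) ^ p ≤ x ^ p + y ^ p := by
  have h := NNReal.rpow_add_le_add_rpow x.toNNReal y.toNNReal hp hp1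
  have h' := NNReal.coe_le_coe.2 h
  push_cast [NNReal.coe_rpow, Real.coe_toNNReal _ hx, Real.coe_toNNReal _ hy] at h'
  exact h'

lemma jap_rpow_add_le {p : ℝ} (hp : 0 ≤ p) (hp1 : p ≤ 1) (x y : ℝ) :
    jap (x + y) ^ p ≤ 2 * (jap x ^ p + jap y ^ p) := by
  have h0 : (0:ℝ) ≤ jap x + jap y := by linarith [jap_pos x, jap_pos y]
  calc jap (x+y) ^ p ≤ (2 * (jap x + jap y)) ^ p := by
        apply Real.rpow_le_rpow (jap_pos _).le (jap_add_le x y) hp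
    _ = 2 ^ p * (jap x + jap y) ^ p := Real.mul_rpow (by norm_num) h0
    _ ≤ 2 * ((jap x) ^ p + (jap y) ^ p) := by
        apply mul_le_mul _ (real_rpow_add_le (jap_pos x).le (jap_pos y).le hp hp1)
          (Real.rpow_nonneg h0 p) (by norm_num)
        calc (2:ℝ) ^ p ≤ 2 ^ (1:ℝ) := Real.rpow_le_rpow_of_exponent_le (by norm_num) hp1
          _ = 2 := Real.rpow_one 2

lemma summable_jap_rpow {q : ℝ} (hq : q < -1) : Summable (fun n : ℤ => jap n ^ q) := by
  have h1 : Summable (fun n : ℤ => |(n:ℝ)| ^ q) := by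
    have := Real.summable_abs_int_rpow (b := -q) (by linarith)
    simpa using this
  have hA : Summable (fun n : ℤ => if n = 0 then (1:ℝ) else 0) := by
    apply summable_of_ne_finset_zero (s := {0})
    intro n hn
    simp only [Finset.mem_singleton] at hn
    simp [hn]
  have h2 : Summable (fun n : ℤ => (if n = 0 then (1:ℝ) else 0) + |(n:ℝ)| ^ q) := hA.add h1
  apply h2.of_nonneg_of_le (fun n => Real.rpow_nonneg (jap_pos _).le q)
  intro n
  by_cases hn : n = 0
  · subst hn
    simp [jap, Real.one_rpow, Real.zero_rpow (show q ≠ 0 by linarith)]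

  · have habs : (1:ℝ) ≤ |(n:ℝ)| := by
      rw [← Int.cast_abs]; exact_mod_cast Int.one_le_abs (by simpa using hn)
    have : jap n ^ q ≤ |(n:ℝ)| ^ q := by
      apply Real.rpow_le_rpow_of_nonpos (by linarith) (abs_le_jap _) (by linarith)
    refine this.trans ?_
    simp [hn]

lemma rpow_mul_rpow_neg {t : ℝ} (ht : 0 < t) (a : ℝ) : t ^ a * t ^ (-a) = 1 := by
  rw [← Real.rpow_add ht]; norm_num

lemma sigma_ptwise (α : ℝ) (hα : 0 < α) (hα' : α < 1/2) {s : ℝ} {ξ η : ℝ}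
    (hs : 0 ≤ s) (hσ : s ≤ 1 / (jap (ξ + η) ^ α * jap ξ ^ (1 - α) * jap η ^ (1 - α))) :
    jap (ξ + η) * s ≤ 2 * (jap η ^ (α - 1) + jap ξ ^ (α - 1)) := by
  have ha := jap_pos (ξ + η); have hb := jap_pos ξ; have hc := jap_pos η
  have haα : (0:ℝ) < jap (ξ+η) ^ α := Real.rpow_pos_of_pos ha α
  have hbα : (0:ℝ) < jap ξ ^ (1-α) := Real.rpow_pos_of_pos hb _
  have hcα : (0:ℝ) < jap η ^ (1-α) := Real.rpow_pos_of_pos hc _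
  have step1 : jap (ξ+η) * s ≤ jap (ξ+η) ^ (1-α) * (jap ξ ^ (α-1) * jap η ^ (α-1)) := by
    have h1 : jap (ξ+η) * s ≤ jap (ξ+η) * (1 / (jap (ξ + η) ^ α * jap ξ ^ (1 - α) * jap η ^ (1 - α))) :=
      mul_le_mul_of_nonneg_left hσ ha.le
    refine h1.trans (le_of_eq ?_)
    rw [show jap ξ ^ (α-1) = (jap ξ ^ (1-α))⁻¹ by
        rw [show α - 1 = -(1-α) by ring, Real.rpow_neg hb.le],
      show jap η ^ (α-1) = (jap η ^ (1-α))⁻¹ by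
        rw [show α - 1 = -(1-α) by ring, Real.rpow_neg hc.le],
      show jap (ξ+η) ^ (1-α) = jap (ξ+η) * (jap (ξ+η) ^ α)⁻¹ by
        rw [show (1:ℝ) - α = 1 + (-α) by ring, Real.rpow_add ha, Real.rpow_one,
          Real.rpow_neg ha.le]]
    field_simp
  have step2 : jap (ξ+η) ^ (1-α) ≤ 2 * (jap ξ ^ (1-α) + jap η ^ (1-α)) :=
    jap_rpow_add_le (by linarith) (by linarith) ξ η
  have hbm : (0:ℝ) < jap ξ ^ (α-1) := Real.rpow_pos_of_pos hb _
  have hcm : (0:ℝ) < jap η ^ (α-1) := Real.rpow_pos_of_pos hc _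
  calc jap (ξ+η) * s ≤ jap (ξ+η) ^ (1-α) * (jap ξ ^ (α-1) * jap η ^ (α-1)) := step1
    _ ≤ (2 * (jap ξ ^ (1-α) + jap η ^ (1-α))) * (jap ξ ^ (α-1) * jap η ^ (α-1)) :=
        mul_le_mul_of_nonneg_right step2 (by positivity)
    _ = 2 * ((jap ξ ^ (1-α) * jap ξ ^ (α-1)) * jap η ^ (α-1)
          + (jap η ^ (1-α) * jap η ^ (α-1)) * jap ξ ^ (α-1)) := by ring
    _ = 2 * (jap η ^ (α - 1) + jap ξ ^ (α - 1)) := by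
        rw [show α - 1 = -(1-α) by ring, rpow_mul_rpow_neg hb, rpow_mul_rpow_neg hc]
        ring

lemma ennreal_sq_add_sq (a b : ℝ≥0∞) : (2*a + 2*b)^2 ≤ 16*(a^2 + b^2) := by
  have h1 : 2*a + 2*b ≤ 4 * max a b := by
    have ha := le_max_left a b; have hb := le_max_right a b
    calc 2*a+2*b ≤ 2*max a b + 2*max a b := by gcongr
      _ = 4 * max a b := by ring
  calc (2*a+2*b)^2 ≤ (4*max a b)^2 := pow_le_pow_left' h1 2
    _ = 16 * (max a b)^2 := by ring
    _ ≤ 16 * (a^2+b^2) := by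
      gcongr
      rcases max_cases a b with ⟨h,_⟩|⟨h,_⟩ <;> rw [h]
      · exact le_self_add
      · exact le_add_self

theorem TPP_L2_L2_to_H1 (α : ℝ) (hα : 0 < α) (hα' : α < 1/2) :
    ∃ C : ℝ, 0 < C ∧
      ∀ (σ : ℤ → ℤ → ℂ) (u v : ℤ → ℂ),
        u 0 = 0 → v 0 = 0 →
        Summable (fun n => ‖u n‖^2) → Summable (fun n => ‖v n‖^2) →
        (∀ ξ η : ℤ, ξ * η * (ξ + η) = 0 → σ ξ η = 0) →
        (∀ ξ η : ℤ, ‖σ ξ η‖ ≤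
            1 / (jap ((ξ : ℝ) + η) ^ α * jap ξ ^ (1 - α) * jap η ^ (1 - α))) →
        Real.sqrt (∑' n : ℤ, jap n ^ 2 * ‖Tcoef σ u v n‖^2)
          ≤ C * Real.sqrt (∑' n : ℤ, ‖u n‖^2) * Real.sqrt (∑' n : ℤ, ‖v n‖^2) := by
  have hS : Summable (fun n : ℤ => jap n ^ (2*α-2)) := summable_jap_rpow (by linarith)
  set S : ℝ := ∑' n : ℤ, jap n ^ (2*α-2) with hSdef
  have hS0 : 0 ≤ S := tsum_nonneg (fun n => Real.rpow_nonneg (jap_pos _).le _)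
  refine ⟨6 * Real.sqrt S + 1, by positivity, ?_⟩
  intro σ u v hu0 hv0 hu hv hvan hσ
  set P : ℝ := ∑' n : ℤ, ‖u n‖^2 with hPdef
  set Q : ℝ := ∑' n : ℤ, ‖v n‖^2 with hQdef
  have hP0 : 0 ≤ P := tsum_nonneg (fun n => by positivity)
  have hQ0 : 0 ≤ Q := tsum_nonneg (fun n => by positivity)
  set A : ℤ → ℝ≥0∞ := fun ξ => ENNReal.ofReal ‖u ξ‖ with hA
  set B : ℤ → ℝ≥0∞ := fun η => ENNReal.ofReal ‖v η‖ with hB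
  set cc : ℤ → ℝ≥0∞ := fun η => ENNReal.ofReal (jap η ^ (α - 1)) with hcc
  set W : ℤ → ℝ≥0∞ := fun η => cc η * B η with hW
  set W' : ℤ → ℝ≥0∞ := fun ξ => cc ξ * A ξ with hW'
  set T := Tcoef σ u v with hT
  -- per-term bound
  have hterm : ∀ n ξ : ℤ, ENNReal.ofReal (jap n * ‖σ ξ (n-ξ) * u ξ * v (n-ξ)‖)
      ≤ 2 * (A ξ * W (n-ξ) + B (n-ξ) * W' ξ) := by
    intro n ξ
    have hkey := sigma_ptwise α hα hα' (norm_nonneg (σ ξ (n-ξ))) (hσ ξ (n-ξ))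
    have hc : ((ξ:ℝ) + ((n - ξ : ℤ):ℝ)) = ((n:ℤ):ℝ) := by push_cast; ring
    rw [hc] at hkey
    have hreal : jap n * ‖σ ξ (n-ξ) * u ξ * v (n-ξ)‖
        ≤ 2 * (‖u ξ‖ * (jap ((n-ξ:ℤ)) ^ (α-1) * ‖v (n-ξ)‖)
             + ‖v (n-ξ)‖ * (jap (ξ:ℤ) ^ (α-1) * ‖u ξ‖)) := by
      rw [norm_mul, norm_mul]
      calc jap n * (‖σ ξ (n-ξ)‖ * ‖u ξ‖ * ‖v (n-ξ)‖)
          = (jap n * ‖σ ξ (n-ξ)‖) * (‖u ξ‖ * ‖v (n-ξ)‖) := by ring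
        _ ≤ (2 * (jap ((n-ξ:ℤ)) ^ (α-1) + jap (ξ:ℤ) ^ (α-1))) * (‖u ξ‖ * ‖v (n-ξ)‖) :=
            mul_le_mul_of_nonneg_right hkey (by positivity)
        _ = 2 * (‖u ξ‖ * (jap ((n-ξ:ℤ)) ^ (α-1) * ‖v (n-ξ)‖)
             + ‖v (n-ξ)‖ * (jap (ξ:ℤ) ^ (α-1) * ‖u ξ‖)) := by ring
    refine (ENNReal.ofReal_le_ofReal hreal).trans (le_of_eq ?_)
    have hj1 : (0:ℝ) ≤ jap ((n-ξ:ℤ)) ^ (α-1) := Real.rpow_nonneg (jap_pos _).le _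
    have hj2 : (0:ℝ) ≤ jap (ξ:ℤ) ^ (α-1) := Real.rpow_nonneg (jap_pos _).le _
    rw [ENNReal.ofReal_mul (by norm_num), ENNReal.ofReal_add (by positivity) (by positivity),
      ENNReal.ofReal_mul (norm_nonneg _), ENNReal.ofReal_mul hj1,
      ENNReal.ofReal_mul (norm_nonneg _), ENNReal.ofReal_mul hj2]
    norm_num [hA, hB, hcc, hW, hW']
    try ring
  -- convolution-type bound on each Fourier coefficient
  set X : ℤ → ℝ≥0∞ := fun n => ∑' ξ, A ξ * W (n-ξ) with hX
  set Y : ℤ → ℝ≥0∞ := fun n => ∑' ξ, B ξ * W' (n-ξ) with hY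
  have hTn : ∀ n : ℤ, ENNReal.ofReal (jap n * ‖T n‖) ≤ 2 * X n + 2 * Y n := by
    intro n
    have hle : ENNReal.ofReal (jap n * ‖T n‖)
        ≤ ∑' ξ, ENNReal.ofReal (jap n * ‖σ ξ (n-ξ) * u ξ * v (n-ξ)‖) := by
      by_cases hsummable : Summable (fun ξ => σ ξ (n-ξ) * u ξ * v (n-ξ))
      · have hns : Summable (fun ξ => ‖σ ξ (n-ξ) * u ξ * v (n-ξ)‖) :=
          summable_norm_iff.2 hsummable
        have h1 : ‖T n‖ ≤ ∑' ξ, ‖σ ξ (n-ξ) * u ξ * v (n-ξ)‖ := norm_tsum_le_tsum_norm hns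
        have h2 : jap n * ‖T n‖ ≤ ∑' ξ, jap n * ‖σ ξ (n-ξ) * u ξ * v (n-ξ)‖ := by
          rw [tsum_mul_left]
          exact mul_le_mul_of_nonneg_left h1 (jap_pos _).le
        refine (ENNReal.ofReal_le_ofReal h2).trans (le_of_eq ?_)
        exact ENNReal.ofReal_tsum_of_nonneg
          (fun ξ => mul_nonneg (jap_pos _).le (norm_nonneg _)) (hns.mul_left _)
      · have hz : T n = 0 := tsum_eq_zero_of_not_summable hsummable
        simp [hz]
    refine hle.trans ?_
    calc ∑' ξ, ENNReal.ofReal (jap n * ‖σ ξ (n-ξ) * u ξ * v (n-ξ)‖)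
        ≤ ∑' ξ, 2 * (A ξ * W (n-ξ) + B (n-ξ) * W' ξ) := ENNReal.tsum_le_tsum (hterm n)
      _ = 2 * ((∑' ξ, A ξ * W (n-ξ)) + ∑' ξ, B (n-ξ) * W' ξ) := by
          rw [ENNReal.tsum_mul_left, ENNReal.tsum_add]
      _ = 2 * X n + 2 * Y n := by
          have hre : (∑' ξ, B (n-ξ) * W' ξ) = ∑' m, B m * W' (n-m) := by
            have := (Equiv.subLeft n).tsum_eq (fun m => B m * W' (n - m))
            simp only [Equiv.subLeft_apply, _root_.sub_sub_cancel] at this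
            exact this
          rw [hre, hX, hY]; ring
  -- sum of squares
  have hΛ : (∑' n : ℤ, ENNReal.ofReal (jap n ^ 2 * ‖T n‖^2))
      ≤ ENNReal.ofReal (32 * S * P * Q) := by
    have hsq : ∀ n : ℤ, ENNReal.ofReal (jap n ^ 2 * ‖T n‖^2)
        ≤ 16 * ((X n)^2 + (Y n)^2) := fun n => by
      calc ENNReal.ofReal (jap n ^ 2 * ‖T n‖^2)
          = ENNReal.ofReal ((jap n * ‖T n‖)^2) := by rw [mul_pow]
        _ = ENNReal.ofReal (jap n * ‖T n‖) ^ 2 := ENNReal.ofReal_pow (mul_nonneg (jap_pos _).le (norm_nonneg _)) 2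
        _ ≤ (2 * X n + 2 * Y n)^2 := pow_le_pow_left' (hTn n) 2
        _ ≤ 16 * ((X n)^2 + (Y n)^2) := ennreal_sq_add_sq _ _
    have hcc2 : (∑' η : ℤ, (cc η)^2) = ENNReal.ofReal S := by
      have : ∀ η : ℤ, (cc η)^2 = ENNReal.ofReal (jap η ^ (2*α-2)) := fun η => by
        rw [hcc, ← ENNReal.ofReal_pow (Real.rpow_nonneg (jap_pos _).le _) 2]
        congr 1
        rw [← Real.rpow_natCast (jap (η:ℤ) ^ (α-1)) 2, ← Real.rpow_mul (jap_pos _).le]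
        norm_num; ring_nf
      rw [tsum_congr this]
      exact (ENNReal.ofReal_tsum_of_nonneg (fun η => Real.rpow_nonneg (jap_pos _).le _) hS).symm
    have hPe : (∑' ξ : ℤ, (A ξ)^2) = ENNReal.ofReal P := by
      have : ∀ ξ : ℤ, (A ξ)^2 = ENNReal.ofReal (‖u ξ‖^2) := fun ξ => by
        rw [hA, ← ENNReal.ofReal_pow (norm_nonneg _) 2]
      rw [tsum_congr this]
      exact (ENNReal.ofReal_tsum_of_nonneg (fun ξ => by positivity) hu).symm
    have hQe : (∑' η : ℤ, (B η)^2) = ENNReal.ofReal Q := by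
      have : ∀ η : ℤ, (B η)^2 = ENNReal.ofReal (‖v η‖^2) := fun η => by
        rw [hB, ← ENNReal.ofReal_pow (norm_nonneg _) 2]
      rw [tsum_congr this]
      exact (ENNReal.ofReal_tsum_of_nonneg (fun η => by positivity) hv).symm
    have hXsum : (∑' n : ℤ, (X n)^2) ≤ ENNReal.ofReal S * ENNReal.ofReal P * ENNReal.ofReal Q := by
      calc (∑' n : ℤ, (X n)^2) ≤ (∑' ξ, (A ξ)^2) * (∑' η, W η)^2 := ennreal_young A W
        _ ≤ (∑' ξ, (A ξ)^2) * ((∑' η, (cc η)^2) * (∑' η, (B η)^2)) := by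
            exact mul_le_mul_right (ennreal_cs cc B) _
        _ = ENNReal.ofReal S * ENNReal.ofReal P * ENNReal.ofReal Q := by
            rw [hPe, hcc2, hQe]; ring
    have hYsum : (∑' n : ℤ, (Y n)^2) ≤ ENNReal.ofReal S * ENNReal.ofReal P * ENNReal.ofReal Q := by
      calc (∑' n : ℤ, (Y n)^2) ≤ (∑' ξ, (B ξ)^2) * (∑' η, W' η)^2 := ennreal_young B W'
        _ ≤ (∑' ξ, (B ξ)^2) * ((∑' η, (cc η)^2) * (∑' η, (A η)^2)) := by
            exact mul_le_mul_right (ennreal_cs cc A) _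
        _ = ENNReal.ofReal S * ENNReal.ofReal P * ENNReal.ofReal Q := by
            rw [hPe, hcc2, hQe]; ring
    calc (∑' n : ℤ, ENNReal.ofReal (jap n ^ 2 * ‖T n‖^2))
        ≤ ∑' n : ℤ, 16 * ((X n)^2 + (Y n)^2) := ENNReal.tsum_le_tsum hsq
      _ = 16 * ((∑' n, (X n)^2) + (∑' n, (Y n)^2)) := by
          rw [ENNReal.tsum_mul_left, ENNReal.tsum_add]
      _ ≤ 16 * (ENNReal.ofReal S * ENNReal.ofReal P * ENNReal.ofReal Q
            + ENNReal.ofReal S * ENNReal.ofReal P * ENNReal.ofReal Q) := by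
          gcongr
      _ = ENNReal.ofReal (32 * S * P * Q) := by
          rw [ENNReal.ofReal_mul (by positivity : (0:ℝ) ≤ 32*S*P),
            ENNReal.ofReal_mul (by positivity : (0:ℝ) ≤ 32*S),
            ENNReal.ofReal_mul (by norm_num : (0:ℝ) ≤ 32)]
          rw [show ENNReal.ofReal (32:ℝ) = (32:ℝ≥0∞) from by norm_num]
          ring
  -- back to the reals
  have hne : (∑' n : ℤ, ENNReal.ofReal (jap n ^ 2 * ‖T n‖^2)) ≠ ⊤ :=
    (hΛ.trans_lt ENNReal.ofReal_lt_top).ne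
  have hsumm : Summable (fun n : ℤ => jap n ^ 2 * ‖T n‖^2) := by
    have := ENNReal.summable_toReal hne
    refine this.congr (fun n => ?_)
    rw [ENNReal.toReal_ofReal (by positivity)]
  have hLle : (∑' n : ℤ, jap n ^ 2 * ‖T n‖^2) ≤ 32 * S * P * Q := by
    rw [← ENNReal.ofReal_le_ofReal_iff (by positivity)]
    rw [ENNReal.ofReal_tsum_of_nonneg (fun n => by positivity) hsumm]
    exact hΛ
  calc Real.sqrt (∑' n : ℤ, jap n ^ 2 * ‖T n‖^2)
      ≤ Real.sqrt (32 * S * P * Q) := Real.sqrt_le_sqrt hLle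
    _ = Real.sqrt 32 * Real.sqrt S * Real.sqrt P * Real.sqrt Q := by
        rw [show (32:ℝ) * S * P * Q = (32*S)*(P*Q) by ring,
          Real.sqrt_mul (by positivity) (P*Q), Real.sqrt_mul (by norm_num) S,
          Real.sqrt_mul hP0 Q]
        ring
    _ ≤ 6 * Real.sqrt S * Real.sqrt P * Real.sqrt Q := by
        have h32 : Real.sqrt 32 ≤ 6 := by
          rw [show (6:ℝ) = Real.sqrt 36 from by
            rw [show (36:ℝ) = 6^2 by norm_num, Real.sqrt_sq (by norm_num)]]
          exact Real.sqrt_le_sqrt (by norm_num)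
        gcongr
    _ ≤ (6 * Real.sqrt S + 1) * Real.sqrt P * Real.sqrt Q := by
        have : (0:ℝ) ≤ Real.sqrt P * Real.sqrt Q := by positivity
        nlinarith [Real.sqrt_nonneg S, Real.sqrt_nonneg P, Real.sqrt_nonneg Q]
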